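/- Let (a,b) be a perplex parameter. Then the element 𝟙 := (1/(a₁b₂ − a₂b₁))·(b₂, −b₁) is a multiplicative identity for the product *: for every x ∈ ℝ², 𝟙 * x = x and x * 𝟙 = x. -/

import Mathlib

open Filter Topology

noncomputable section

/-- The perplex product on `ℝ²` determined by the parameters `a = (a₁,a₂,a₃)`,
`b = (b₁,b₂,b₃)`. -/
def pmul (a₁ a₂ a₃ b₁ b₂ b₃ : ℝ) (x y : ℝ × ℝ) : ℝ × ℝ :=
  (a₁ * x.1 * y.1 + a₂ * (x.1 * y.2 + x.2 * y.1) + a₃ * x.2 * y.2,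
   b₁ * x.1 * y.1 + b₂ * (x.1 * y.2 + x.2 * y.1) + b₃ * x.2 * y.2)

/-- `(a,b)` is a perplex parameter: conditions (i)-(iv). -/
def IsPerplexParam (a₁ a₂ a₃ b₁ b₂ b₃ : ℝ) : Prop :=
  a₁ * a₃ - a₂ ^ 2 ≠ 0 ∧ a₁ * b₂ - a₂ * b₁ ≠ 0 ∧
    a₂ * b₂ - a₃ * b₁ = 0 ∧ a₁ * a₃ - a₂ ^ 2 + a₂ * b₃ - a₃ * b₂ = 0

/-- The multiplicative identity `𝟙` of the perplex algebra. -/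
def pone (a₁ a₂ b₁ b₂ : ℝ) : ℝ × ℝ :=
  (1 / (a₁ * b₂ - a₂ * b₁)) • ((b₂, -b₁) : ℝ × ℝ)

lemma key_det (a₁ a₂ a₃ b₁ b₂ b₃ : ℝ)
    (hp : IsPerplexParam a₁ a₂ a₃ b₁ b₂ b₃) :
    a₁ * b₂ - a₂ * b₁ = b₂ ^ 2 - b₁ * b₃ := by
  obtain ⟨h1, h2, h3, h4⟩ := hp
  rcases eq_or_ne a₂ 0 with h | h
  · subst h
    have ha₃ : a₃ ≠ 0 := by intro hh; apply h1; rw [hh]; ring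
    have hb₁ : b₁ = 0 := by
      have h3' : a₃ * b₁ = 0 := by linarith
      exact (mul_eq_zero.mp h3').resolve_left ha₃
    have ha₁ : a₁ = b₂ := by
      have : a₃ * (a₁ - b₂) = 0 := by linarith [h4]
      rcases mul_eq_zero.mp this with hh | hh
      · exact absurd hh ha₃
      · linarith
    subst hb₁; rw [ha₁]; ring
  · have : a₂ * (a₁ * b₂ - a₂ * b₁) = a₂ * (b₂ ^ 2 - b₁ * b₃) := by
      linear_combination b₁ * h4 + (a₁ - b₂) * h3
    exact mul_left_cancel₀ h this

/-- For a perplex parameter, `𝟙 = (1/(a₁b₂ − a₂b₁))·(b₂, −b₁)` is a two-sided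
multiplicative identity for `*`. -/
theorem pone_is_identity (a₁ a₂ a₃ b₁ b₂ b₃ : ℝ)
    (hp : IsPerplexParam a₁ a₂ a₃ b₁ b₂ b₃) :
    ∀ x : ℝ × ℝ, pmul a₁ a₂ a₃ b₁ b₂ b₃ (pone a₁ a₂ b₁ b₂) x = x ∧ pmul a₁ a₂ a₃ b₁ b₂ b₃ x (pone a₁ a₂ b₁ b₂) = x := by
  intro x
  obtain ⟨h1, h2, h3, h4⟩ := hp
  have hk := key_det a₁ a₂ a₃ b₁ b₂ b₃ ⟨h1, h2, h3, h4⟩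
  have hD : a₁ * b₂ - a₂ * b₁ ≠ 0 := h2
  have hcomm : pmul a₁ a₂ a₃ b₁ b₂ b₃ x (pone a₁ a₂ b₁ b₂)
      = pmul a₁ a₂ a₃ b₁ b₂ b₃ (pone a₁ a₂ b₁ b₂) x := by
    simp only [pmul, Prod.mk.injEq]; constructor <;> ring
  have hleft : pmul a₁ a₂ a₃ b₁ b₂ b₃ (pone a₁ a₂ b₁ b₂) x = x := by
    simp only [pmul, pone, Prod.smul_mk, smul_eq_mul, Prod.ext_iff]
    constructor
    · field_simp
      linear_combination x.2 * h3
    · field_simp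
      rw [div_eq_iff (by rwa [mul_comm b₁ a₂])]
      linear_combination (-x.2) * hk
  exact ⟨hleft, hcomm.trans hleft⟩
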